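/- Let $m$ be even and let $a_1, \ldots, a_k$ be positive integers with $a_i \ge 3(m+1)$ for each $i$ and $\sum_i a_i = \ell(m+1)$ for some integer $\ell$. Let $S$ be a collection of pairs $\{x, m+1-x\}$ with $x \in [m/2]$ satisfying $|S| \ge \max\{\ell, m/4 + 2k\}$. Then there exists a subcollection $S' \subseteq S$ and a partition $I_1, \ldots, I_k$ of $\bigcup S'$ with $\sum_{x \in I_i} x = a_i$ for each $i$. -/

import Mathlib

set_option maxHeartbeats 1000000

section Helpers
variable {m : ℕ}

lemma pair_mem_bounds (hme : Even m) {x : ℕ} (hx : x ∈ Finset.Icc 1 (m/2)) :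
    1 ≤ x ∧ x ≤ m/2 ∧ m/2 < m+1-x ∧ x < m+1-x ∧ m+1-x ≤ m := by
  simp only [Finset.mem_Icc] at hx
  obtain ⟨h2, rfl⟩ := hme
  omega

lemma pair_disjoint (hme : Even m) {x y : ℕ} (hx : x ∈ Finset.Icc 1 (m/2))
    (hy : y ∈ Finset.Icc 1 (m/2)) (hxy : x ≠ y) :
    Disjoint ({x, m+1-x} : Finset ℕ) ({y, m+1-y} : Finset ℕ) := by
  obtain ⟨_, _, _, _, _⟩ := pair_mem_bounds hme hx
  obtain ⟨_, _, _, _, _⟩ := pair_mem_bounds hme hy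
  simp only [Finset.disjoint_left, Finset.mem_insert, Finset.mem_singleton]
  rintro a (rfl | rfl) (h | h) <;> omega

lemma pair_sum (hme : Even m) {x : ℕ} (hx : x ∈ Finset.Icc 1 (m/2)) :
    ({x, m+1-x} : Finset ℕ).sum id = m+1 := by
  obtain ⟨_, _, _, h4, _⟩ := pair_mem_bounds hme hx
  rw [Finset.sum_pair (by omega)]
  simp only [id]
  omega

lemma biUnion_fin_succ {n : ℕ} (f : Fin (n+1) → Finset ℕ) :
    Finset.univ.biUnion f = f 0 ∪ Finset.univ.biUnion (fun i : Fin n => f i.succ) := by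
  ext a
  simp only [Finset.mem_biUnion, Finset.mem_univ, true_and, Finset.mem_union]
  exact ⟨fun ⟨i, hi⟩ => by
    rcases Fin.eq_zero_or_eq_succ i with rfl | ⟨j, rfl⟩
    · exact Or.inl hi
    · exact Or.inr ⟨j, hi⟩,
   fun h => by
    rcases h with h | ⟨j, hj⟩
    · exact ⟨0, h⟩
    · exact ⟨j.succ, hj⟩⟩

/-- Core pigeonhole lemma: any nonzero residue is a sum of two signed elements
of `T` from distinct pairs. -/
lemma core_lemma (hme : Even m) {T : Finset ℕ} (hT : T ⊆ Finset.Icc 1 (m/2))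
    (hcard : m + 8 ≤ 4 * T.card) (r : ZMod (m+1)) (hr : r ≠ 0) :
    ∃ x ∈ T, ∃ y ∈ T, x ≠ y ∧ ∃ u v : ℕ,
      (u = x ∨ u = m+1-x) ∧ (v = y ∨ v = m+1-y) ∧ ((u : ZMod (m+1)) + v = r) := by
  classical
  have hcast : ∀ z ∈ T, ((z : ZMod (m+1))).val = z := by
    intro z hz
    obtain ⟨h1, h2, _, _, _⟩ := pair_mem_bounds hme (hT hz)
    exact ZMod.val_natCast_of_lt (by omega)
  set A : Finset (ZMod (m+1)) :=
    T.image (fun z : ℕ => (z : ZMod (m+1))) ∪ T.image (fun z : ℕ => -(z : ZMod (m+1))) with hA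
  have hinj1 : Set.InjOn (fun z : ℕ => (z : ZMod (m+1))) (T : Set ℕ) := by
    intro z hz w hw h
    simp only at h
    rw [← hcast z hz, ← hcast w hw, h]
  have hinj2 : Set.InjOn (fun z : ℕ => -(z : ZMod (m+1))) (T : Set ℕ) := by
    intro z hz w hw h
    simp only [neg_inj] at h
    exact hinj1 hz hw h
  have hsum_ne : ∀ z ∈ T, ∀ w ∈ T, (z : ZMod (m+1)) ≠ -(w : ZMod (m+1)) := by
    intro z hz w hw hzw
    have hzzero : ((z + w : ℕ) : ZMod (m+1)) = 0 := by
      push_cast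
      rw [hzw]; ring
    rw [ZMod.natCast_eq_zero_iff] at hzzero
    obtain ⟨h1, h2, _, _, _⟩ := pair_mem_bounds hme (hT hz)
    obtain ⟨h1', h2', _, _, _⟩ := pair_mem_bounds hme (hT hw)
    have := Nat.le_of_dvd (by omega) hzzero
    omega
  have hdisj : Disjoint (T.image (fun z : ℕ => (z : ZMod (m+1))))
      (T.image (fun z : ℕ => -(z : ZMod (m+1)))) := by
    simp only [Finset.disjoint_left, Finset.mem_image]
    rintro α ⟨z, hz, rfl⟩ ⟨w, hw, hzw⟩
    exact hsum_ne z hz w hw hzw.symm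
  have hAcard : A.card = 2 * T.card := by
    rw [hA, Finset.card_union_of_disjoint hdisj,
      Finset.card_image_of_injOn hinj1, Finset.card_image_of_injOn hinj2]
    ring
  -- B = A ∩ (r - A)
  set B : Finset (ZMod (m+1)) := A ∩ A.image (fun α => r - α) with hB
  have himgcard : (A.image (fun α => r - α)).card = A.card :=
    Finset.card_image_of_injOn (Function.Injective.injOn sub_right_injective)
  have hZcard : Fintype.card (ZMod (m+1)) = m + 1 := ZMod.card (m+1)
  have hBcard : 7 ≤ B.card := by
    have h1 : (A ∪ A.image (fun α => r - α)).card ≤ m + 1 := by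
      have := Finset.card_le_univ (A ∪ A.image (fun α => r - α))
      rwa [hZcard] at this
    have h3 : 4 * T.card ≤ B.card + (m+1) := by
      calc 4 * T.card = A.card + (A.image (fun α => r - α)).card := by
            rw [himgcard, hAcard]; ring
      _ = (A ∩ A.image (fun α => r - α)).card + (A ∪ A.image (fun α => r - α)).card :=
            (Finset.card_inter_add_card_union _ _).symm
      _ ≤ B.card + (m+1) := add_le_add (le_of_eq (by rw [hB])) h1
    omega
  have hdouble : forall δ : ZMod (m+1), δ + δ = 0 -> δ = 0 := by
    intro δ hδ
    have h2u : IsUnit (2 : ZMod (m+1)) := by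
      have hcop : IsUnit ((2:ℕ) : ZMod (m+1)) := by
        rw [ZMod.isUnit_iff_coprime, Nat.Prime.coprime_iff_not_dvd Nat.prime_two]
        obtain ⟨c, rfl⟩ := hme
        omega
      simpa using hcop
    have h20 : (2 : ZMod (m+1)) * δ = (2 : ZMod (m+1)) * 0 := by
      rw [mul_zero, two_mul]; exact hδ
    exact h2u.mul_left_cancel h20
  have hbad : forall α₁ α₂ : ZMod (m+1), α₁ = r - α₁ -> α₂ = r - α₂ -> α₁ = α₂ := by
    intro α₁ α₂ h1 h2
    have h3 : (α₁ - α₂) + (α₁ - α₂) = 0 := by linear_combination h1 - h2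
    have h4 := hdouble _ h3
    linear_combination h4
  -- pick a good α in B
  obtain ⟨α₁, hα₁, α₂, hα₂, hne⟩ := Finset.one_lt_card.mp (by omega : 1 < B.card)
  have hgood : ∃ α ∈ B, α ≠ r - α := by
    by_cases h : α₁ = r - α₁
    · exact ⟨α₂, hα₂, fun h2 => hne (hbad α₁ α₂ h h2)⟩
    · exact ⟨α₁, hα₁, h⟩
  obtain ⟨α, hαB, hαgood⟩ := hgood
  rw [hB, Finset.mem_inter] at hαB
  obtain ⟨hαA, hαI⟩ := hαB
  have hβA : r - α ∈ A := by
    rw [Finset.mem_image] at hαI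
    obtain ⟨γ, hγ, hγα⟩ := hαI
    have hγ2 : r - α = γ := by rw [← hγα]; ring
    rwa [hγ2]
  set β := r - α with hβ
  have hβne : β ≠ α := fun h => hαgood (h.symm)
  have hβneg : β ≠ -α := by
    intro h
    exact hr (by linear_combination h - hβ)
  have hunpack : forall γ : ZMod (m+1), γ ∈ A -> ∃ z ∈ T, ∃ w : ℕ,
      (w = z ∨ w = m+1-z) ∧ ((w : ZMod (m+1)) = γ) ∧ (γ = (z:ZMod (m+1)) ∨ γ = -(z:ZMod (m+1))) := by
    intro γ hγ
    rw [hA, Finset.mem_union, Finset.mem_image, Finset.mem_image] at hγ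
    rcases hγ with ⟨z, hz, rfl⟩ | ⟨z, hz, rfl⟩
    · exact ⟨z, hz, z, Or.inl rfl, rfl, Or.inl rfl⟩
    · refine ⟨z, hz, m+1-z, Or.inr rfl, ?_, Or.inr rfl⟩
      obtain ⟨h1, h2, _, _, _⟩ := pair_mem_bounds hme (hT hz)
      push_cast [Nat.cast_sub (by omega : z ≤ m+1)]
      simp
  obtain ⟨x, hx, u, hu, huα, hαx⟩ := hunpack α hαA
  obtain ⟨y, hy, v, hv, hvβ, hβy⟩ := hunpack β hβA
  have hxy : x ≠ y := by
    rintro rfl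
    rcases hαx with h1 | h1 <;> rcases hβy with h2 | h2
    · exact hαgood (h1.trans h2.symm)
    · exact hβneg (h2.trans (by rw [h1]))
    · exact hβneg (by rw [h2, h1, neg_neg])
    · exact hαgood (h1.trans h2.symm)
  exact ⟨x, hx, y, hy, hxy, u, v, hu, hv, by rw [huα, hvβ]; linear_combination hβ⟩

theorem phase1 (hme : Even m) :
    ∀ (k : ℕ) (T P : Finset ℕ) (a : Fin (k+1) → ℕ),
    T ⊆ Finset.Icc 1 (m/2) →
    (∀ z ∈ P, 1 ≤ z ∧ z ≤ m) →
    P.card ≤ 2 →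
    (∀ z ∈ T, z ∉ P ∧ m+1-z ∉ P) →
    (∀ i, 3*(m+1) ≤ a i) →
    P.sum id ≤ 2*m →
    ((∑ i, a i : ℕ) : ZMod (m+1)) = ((P.sum id : ℕ) : ZMod (m+1)) →
    m + 8*k ≤ 4 * T.card →
    ∃ used : Finset ℕ, ∃ J : Fin (k+1) → Finset ℕ,
      used ⊆ T ∧ used.card ≤ 2*k ∧
      (∀ i j, i ≠ j → Disjoint (J i) (J j)) ∧
      Finset.univ.biUnion J = P ∪ used.biUnion (fun x => {x, m+1-x}) ∧
      (∀ i, (J i).sum id ≤ a i ∧ (((J i).sum id : ℕ) : ZMod (m+1)) = (a i : ZMod (m+1))) := by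
  intro k
  induction k with
  | zero =>
    intro T P a hT hP hPcard hPT ha hPsum hdvd hTcard
    refine ⟨∅, fun _ => P, Finset.empty_subset _, by simp, ?_, ?_, ?_⟩
    · intro i j hij
      exact absurd (Fin.ext (by have := i.isLt; have := j.isLt; omega)) hij
    · ext b; simp
    · intro i
      have hi0 : i = 0 := Fin.ext (by have := i.isLt; omega)
      have hsum1 : (∑ j, a j) = a 0 := by
        rw [Fin.sum_univ_one]
      subst hi0
      rw [hsum1] at hdvd
      show P.sum id ≤ a 0 ∧ ((P.sum id : ℕ) : ZMod (m+1)) = (a 0 : ZMod (m+1))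
      exact ⟨by have := ha 0; omega, hdvd.symm⟩
  | succ k ih =>
    intro T P a hT hP hPcard hPT ha hPsum hdvd hTcard
    set p := P.sum id with hp
    by_cases hr0 : (a 0 : ZMod (m+1)) - (p : ZMod (m+1)) = 0
    · -- clean boundary
      have hdvd' : ((∑ i : Fin (k+1), a i.succ : ℕ) : ZMod (m+1)) =
          (((∅ : Finset ℕ).sum id : ℕ) : ZMod (m+1)) := by
        have hsplit : (∑ i, a i) = a 0 + ∑ i : Fin (k+1), a i.succ := Fin.sum_univ_succ a
        push_cast [hsplit] at hdvd ⊢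
        simp only [Finset.sum_empty, Nat.cast_zero]
        linear_combination hdvd - hr0
      obtain ⟨used', J', hu'T, hu'card, hJ'disj, hJ'union, hJ'sum⟩ :=
        ih T ∅ (fun i => a i.succ) hT (by simp) (by simp) (by simp) (fun i => ha _)
          (by simp) hdvd' (by omega)
      refine ⟨used', Fin.cases P J', hu'T, by omega, ?_, ?_, ?_⟩
      · -- disjointness
        have hJ'P : ∀ i, Disjoint P (J' i) := by
          intro i
          have hsub : J' i ⊆ used'.biUnion (fun x => {x, m+1-x}) := by
            have h1 : J' i ⊆ Finset.univ.biUnion J' :=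
              Finset.subset_biUnion_of_mem J' (Finset.mem_univ i)
            rw [hJ'union] at h1
            simpa using h1
          rw [Finset.disjoint_left]
          intro b hbP hbJ
          have := hsub hbJ
          simp only [Finset.mem_biUnion, Finset.mem_insert, Finset.mem_singleton] at this
          obtain ⟨z, hz, hbz⟩ := this
          have h2 := hPT z (hu'T hz)
          rcases hbz with rfl | rfl
          · exact h2.1 hbP
          · exact h2.2 hbP
        intro i j hij
        rcases Fin.eq_zero_or_eq_succ i with rfl | ⟨i', rfl⟩ <;>
          rcases Fin.eq_zero_or_eq_succ j with rfl | ⟨j', rfl⟩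
        · exact absurd rfl hij
        · simp only [Fin.cases_zero, Fin.cases_succ]; exact hJ'P j'
        · simp only [Fin.cases_zero, Fin.cases_succ]; exact (hJ'P i').symm
        · simp only [Fin.cases_succ]
          exact hJ'disj i' j' (fun h => hij (by rw [h]))
      · rw [biUnion_fin_succ (Fin.cases P J')]
        simp only [Fin.cases_zero, Fin.cases_succ]
        rw [hJ'union]
        simp
      · intro i
        refine Fin.cases ?_ ?_ i
        · simp only [Fin.cases_zero]
          refine ⟨by have := ha 0; omega, ?_⟩
          linear_combination -hr0
        · intro i'
          simpa using hJ'sum i'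
    · -- split boundary
      set r : ZMod (m+1) := (a 0 : ZMod (m+1)) - ((p : ℕ) : ZMod (m+1)) with hrdef
      -- we need the core lemma (proved in t2); assume available as core_lemma
      obtain ⟨x, hx, y, hy, hxy, u, v, hu, hv, hw⟩ :=
        core_lemma hme hT (by omega) r hr0
      obtain ⟨hx1, hx2, hx3, hx4, hx5⟩ := pair_mem_bounds hme (hT hx)
      obtain ⟨hy1, hy2, hy3, hy4, hy5⟩ := pair_mem_bounds hme (hT hy)
      have hub : 1 ≤ u ∧ u ≤ m := by rcases hu with rfl | rfl <;> omega
      have hvb : 1 ≤ v ∧ v ≤ m := by rcases hv with rfl | rfl <;> omega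
      have huv : u ≠ v := by rcases hu with rfl | rfl <;> rcases hv with rfl | rfl <;> omega
      have huP : u ∉ P := by
        rcases hu with h | h <;> rw [h]
        exacts [(hPT x hx).1, (hPT x hx).2]
      have hvP : v ∉ P := by
        rcases hv with h | h <;> rw [h]
        exacts [(hPT y hy).1, (hPT y hy).2]
      -- J0 and its sum
      set J0 : Finset ℕ := insert u (insert v P) with hJ0def
      have hJ0sum : J0.sum id = u + v + p := by
        rw [hJ0def, Finset.sum_insert (by simp [huv, huP]),
          Finset.sum_insert hvP]
        simp only [id]
        have hpp : p = ∑ x ∈ P, x := by rw [hp]; exact Finset.sum_congr rfl (fun _ _ => rfl)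
        omega
      have hcastuv : ((u + v + p : ℕ) : ZMod (m+1)) = (a 0 : ZMod (m+1)) := by
        push_cast
        rw [hrdef] at hw
        linear_combination hw
      have hle0 : u + v + p ≤ a 0 := by
        by_contra hcon
        push_neg at hcon
        have hdiff : ((u + v + p - a 0 : ℕ) : ZMod (m+1)) = 0 := by
          rw [Nat.cast_sub hcon.le, hcastuv]
          ring
        rw [ZMod.natCast_eq_zero_iff] at hdiff
        have h1 := Nat.le_of_dvd (by omega) hdiff
        have h2 := ha 0
        omega
      -- the complement pair
      have hxx : m+1-(m+1-x) = x := by omega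
      have hyy : m+1-(m+1-y) = y := by omega
      have hpair_u : ({u, m+1-u} : Finset ℕ) = {x, m+1-x} := by
        rcases hu with rfl | rfl
        · rfl
        · rw [hxx, Finset.pair_comm]
      have hpair_v : ({v, m+1-v} : Finset ℕ) = {y, m+1-y} := by
        rcases hv with rfl | rfl
        · rfl
        · rw [hyy, Finset.pair_comm]
      have hmu : m+1-u = x ∨ m+1-u = m+1-x := by rcases hu with rfl | rfl <;> omega
      have hmv : m+1-v = y ∨ m+1-v = m+1-y := by rcases hv with rfl | rfl <;> omega
      set P' : Finset ℕ := {m+1-u, m+1-v} with hP'def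
      have hmuv : m+1-u ≠ m+1-v := by
        rcases hmu with h1 | h1 <;> rcases hmv with h2 | h2 <;> omega
      have hP'sum : P'.sum id = (m+1-u) + (m+1-v) := by
        rw [hP'def, Finset.sum_pair hmuv]
        simp only [id]
      set T' : Finset ℕ := (T.erase x).erase y with hT'def
      have hyx : y ∈ T.erase x := Finset.mem_erase.mpr ⟨fun h => hxy h.symm, hy⟩
      have hT'card : T'.card + 2 = T.card := by
        rw [hT'def, Finset.card_erase_of_mem hyx, Finset.card_erase_of_mem hx]
        have : 2 ≤ T.card := by omega
        omega
      have hT'mem : ∀ z, z ∈ T' ↔ (z ∈ T ∧ z ≠ x ∧ z ≠ y) := by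
        intro z
        rw [hT'def]
        simp only [Finset.mem_erase]
        tauto
      have hT'sub : T' ⊆ T := fun z hz => ((hT'mem z).mp hz).1
      -- recursive call
      have hdvd' : ((∑ i : Fin (k+1), a i.succ : ℕ) : ZMod (m+1)) =
          ((P'.sum id : ℕ) : ZMod (m+1)) := by
        have hsplit : (∑ i, a i) = a 0 + ∑ i : Fin (k+1), a i.succ := Fin.sum_univ_succ a
        rw [hsplit] at hdvd
        rw [hP'sum]
        have hc1 : ((m+1-u : ℕ) : ZMod (m+1)) = -(u : ZMod (m+1)) := by
          rw [Nat.cast_sub (by omega)]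
          simp
        have hc2 : ((m+1-v : ℕ) : ZMod (m+1)) = -(v : ZMod (m+1)) := by
          rw [Nat.cast_sub (by omega)]
          simp
        push_cast [hc1, hc2] at hdvd ⊢
        rw [hrdef] at hw
        push_cast at hw
        linear_combination hdvd + hw
      obtain ⟨used', J', hu'T, hu'card, hJ'disj, hJ'union, hJ'sum⟩ :=
        ih T' P' (fun i => a i.succ) (fun z hz => hT (hT'sub hz))
          (by
            intro z hz
            rw [hP'def] at hz
            simp only [Finset.mem_insert, Finset.mem_singleton] at hz
            rcases hz with rfl | rfl <;> rcases hmu with h1 | h1 <;> rcases hmv with h2 | h2 <;> omega)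
          (by rw [hP'def]; exact (Finset.card_insert_le _ _).trans (by simp))
          (by
            intro z hz
            rw [hT'mem] at hz
            obtain ⟨hzT, hzx, hzy⟩ := hz
            obtain ⟨hz1, hz2, hz3, hz4, hz5⟩ := pair_mem_bounds hme (hT hzT)
            rw [hP'def]
            simp only [Finset.mem_insert, Finset.mem_singleton]
            constructor
            · rintro (h | h) <;> rcases hmu with h1 | h1 <;> rcases hmv with h2 | h2 <;> omega
            · rintro (h | h) <;> rcases hmu with h1 | h1 <;> rcases hmv with h2 | h2 <;> omega)
          (fun i => ha _)
          (by rw [hP'sum]; omega)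
          hdvd'
          (by omega)
      refine ⟨insert x (insert y used'), Fin.cases J0 J', ?_, ?_, ?_, ?_, ?_⟩
      · intro z hz
        simp only [Finset.mem_insert] at hz
        rcases hz with rfl | rfl | hz
        exacts [hx, hy, hT'sub (hu'T hz)]
      · calc (insert x (insert y used')).card ≤ (insert y used').card + 1 :=
              Finset.card_insert_le _ _
        _ ≤ used'.card + 2 := by have := Finset.card_insert_le y used'; omega
        _ ≤ 2*(k+1) := by omega
      · -- disjointness
        have hJ'sub : ∀ i, J' i ⊆ P' ∪ used'.biUnion (fun z => {z, m+1-z}) := by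
          intro i
          have h1 : J' i ⊆ Finset.univ.biUnion J' :=
            Finset.subset_biUnion_of_mem J' (Finset.mem_univ i)
          rwa [hJ'union] at h1
        have hmemchar : ∀ b, b ∈ P' ∪ used'.biUnion (fun z => {z, m+1-z}) →
            (b = m+1-u ∨ b = m+1-v ∨ ∃ z, z ∈ T ∧ z ≠ x ∧ z ≠ y ∧ (b = z ∨ b = m+1-z)) := by
          intro b hb
          rw [Finset.mem_union, hP'def] at hb
          simp only [Finset.mem_insert, Finset.mem_singleton, Finset.mem_biUnion] at hb
          rcases hb with (rfl | rfl) | ⟨z, hz, hbz⟩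
          · exact Or.inl rfl
          · exact Or.inr (Or.inl rfl)
          · have hz' := (hT'mem z).mp (hu'T hz)
            exact Or.inr (Or.inr ⟨z, hz'.1, hz'.2.1, hz'.2.2, by simpa using hbz⟩)
        have hJ0disj : ∀ i, Disjoint J0 (J' i) := by
          intro i
          rw [Finset.disjoint_left]
          intro b hb hb'
          have hchar := hmemchar b (hJ'sub i hb')
          rw [hJ0def] at hb
          simp only [Finset.mem_insert] at hb
          rcases hb with rfl | rfl | hbP
          · -- b = u
            rcases hchar with h1 | h1 | ⟨z, hzT, hzx, hzy, h1⟩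
            · rcases hu with h | h <;> omega
            · rcases hu with h | h <;> rcases hmv with h2 | h2 <;> omega
            · obtain ⟨hz1, hz2, hz3, hz4, hz5⟩ := pair_mem_bounds hme (hT hzT)
              rcases hu with h | h <;> rcases h1 with h3 | h3 <;> omega
          · -- b = v
            rcases hchar with h1 | h1 | ⟨z, hzT, hzx, hzy, h1⟩
            · rcases hv with h | h <;> rcases hmu with h2 | h2 <;> omega
            · rcases hv with h | h <;> omega
            · obtain ⟨hz1, hz2, hz3, hz4, hz5⟩ := pair_mem_bounds hme (hT hzT)
              rcases hv with h | h <;> rcases h1 with h3 | h3 <;> omega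
          · -- b ∈ P
            rcases hchar with h1 | h1 | ⟨z, hzT, hzx, hzy, h1⟩
            · subst h1
              rcases hmu with h2 | h2
              · rw [h2] at hbP; exact (hPT x hx).1 hbP
              · rw [h2] at hbP; exact (hPT x hx).2 hbP
            · subst h1
              rcases hmv with h2 | h2
              · rw [h2] at hbP; exact (hPT y hy).1 hbP
              · rw [h2] at hbP; exact (hPT y hy).2 hbP
            · rcases h1 with rfl | rfl
              · exact (hPT b hzT).1 hbP
              · exact (hPT z hzT).2 hbP
        intro i j hij
        rcases Fin.eq_zero_or_eq_succ i with rfl | ⟨i', rfl⟩ <;>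
          rcases Fin.eq_zero_or_eq_succ j with rfl | ⟨j', rfl⟩
        · exact absurd rfl hij
        · simp only [Fin.cases_zero, Fin.cases_succ]; exact hJ0disj j'
        · simp only [Fin.cases_zero, Fin.cases_succ]; exact (hJ0disj i').symm
        · simp only [Fin.cases_succ]
          exact hJ'disj i' j' (fun h => hij (by rw [h]))
      · -- union
        rw [biUnion_fin_succ (Fin.cases J0 J')]
        simp only [Fin.cases_zero, Fin.cases_succ]
        rw [hJ'union]
        have hpu := Finset.ext_iff.mp hpair_u
        have hpv := Finset.ext_iff.mp hpair_v
        ext b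
        have hpub := hpu b
        have hpvb := hpv b
        simp only [Finset.mem_insert, Finset.mem_singleton] at hpub hpvb
        rw [hJ0def, hP'def]
        simp only [Finset.mem_union, Finset.mem_insert, Finset.mem_singleton,
          Finset.mem_biUnion]
        constructor
        · rintro ((rfl | rfl | hbP) | (rfl | rfl) | ⟨z, hz, hbz⟩)
          · exact Or.inr ⟨x, by simp, hu⟩
          · exact Or.inr ⟨y, by simp, hv⟩
          · exact Or.inl hbP
          · exact Or.inr ⟨x, by simp, hmu⟩
          · exact Or.inr ⟨y, by simp, hmv⟩
          · exact Or.inr ⟨z, by simp [hz], hbz⟩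
        · rintro (hbP | ⟨z, hz, hbz⟩)
          · exact Or.inl (Or.inr (Or.inr hbP))
          · rcases hz with rfl | rfl | hz
            · rcases hpub.mpr hbz with h | h
              · exact Or.inl (Or.inl h)
              · exact Or.inr (Or.inl (Or.inl h))
            · rcases hpvb.mpr hbz with h | h
              · exact Or.inl (Or.inr (Or.inl h))
              · exact Or.inr (Or.inl (Or.inr h))
            · exact Or.inr (Or.inr ⟨z, hz, hbz⟩)
      · -- sums
        intro i
        rcases Fin.eq_zero_or_eq_succ i with rfl | ⟨i', rfl⟩
        · simp only [Fin.cases_zero]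
          rw [hJ0sum]
          exact ⟨hle0, hcastuv⟩
        · simp only [Fin.cases_succ]
          exact hJ'sum i'

end Helpers


lemma distribute : ∀ (k : ℕ) (d : Fin k → ℕ) (R : Finset ℕ), (∑ i, d i) ≤ R.card →
    ∃ F : Fin k → Finset ℕ, (∀ i, F i ⊆ R) ∧
      (∀ i j, i ≠ j → Disjoint (F i) (F j)) ∧ (∀ i, (F i).card = d i) := by
  intro k
  induction k with
  | zero =>
    intro d R _
    exact ⟨fun _ => ∅, fun i => i.elim0, fun i => i.elim0, fun i => i.elim0⟩
  | succ k ih =>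
    intro d R hle
    have hsplit : (∑ i, d i) = d 0 + ∑ i : Fin k, d i.succ := Fin.sum_univ_succ d
    obtain ⟨F0, hF0R, hF0card⟩ := Finset.exists_subset_card_eq (show d 0 ≤ R.card by omega)
    have hcard' : (∑ i : Fin k, d i.succ) ≤ (R \ F0).card := by
      rw [Finset.card_sdiff_of_subset hF0R, hF0card]
      omega
    obtain ⟨F', hF'R, hF'disj, hF'card⟩ := ih (fun i => d i.succ) (R \ F0) hcard'
    refine ⟨Fin.cases F0 F', ?_, ?_, ?_⟩
    · intro i
      rcases Fin.eq_zero_or_eq_succ i with rfl | ⟨i', rfl⟩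
      · simpa using hF0R
      · simp only [Fin.cases_succ]
        exact (hF'R i').trans (Finset.sdiff_subset)
    · have hdF0 : ∀ i', Disjoint F0 (F' i') := fun i' =>
        Finset.disjoint_of_subset_right (hF'R i') Finset.disjoint_sdiff
      intro i j hij
      rcases Fin.eq_zero_or_eq_succ i with rfl | ⟨i', rfl⟩ <;>
        rcases Fin.eq_zero_or_eq_succ j with rfl | ⟨j', rfl⟩
      · exact absurd rfl hij
      · simp only [Fin.cases_zero, Fin.cases_succ]; exact hdF0 j'
      · simp only [Fin.cases_zero, Fin.cases_succ]; exact (hdF0 i').symm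
      · simp only [Fin.cases_succ]
        exact hF'disj i' j' (fun h => hij (by rw [h]))
    · intro i
      rcases Fin.eq_zero_or_eq_succ i with rfl | ⟨i', rfl⟩
      · simpa using hF0card
      · simpa using hF'card i'


/-- Claim: for even `m`, if `a 1, …, a k` are positive integers with `a i ≥ 3(m+1)` summing to
`ℓ(m+1)`, and `S` is a collection of pairs `{x, m+1-x}` (`x ∈ [m/2]`) with
`|S| ≥ max {ℓ, m/4 + 2k}`, then some subcollection `S' ⊆ S` has its union partitioned into
sets `I 1, …, I k` with `∑ I i = a i`. -/
theorem separates_all_large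
    (m k ℓ : ℕ) (hm : 0 < m) (hmeven : Even m) (hk : 0 < k)
    (a : Fin k → ℕ) (ha : ∀ i, 3 * (m + 1) ≤ a i)
    (hsum : ∑ i, a i = ℓ * (m + 1))
    (S : Finset (Finset ℕ))
    (hS : S ⊆ (Finset.Icc 1 (m / 2)).image fun x => ({x, m + 1 - x} : Finset ℕ))
    (hcard₁ : ℓ ≤ S.card)
    (hcard₂ : (m : ℚ) / 4 + 2 * k ≤ S.card) :
    ∃ S' ⊆ S, ∃ I : Fin k → Finset ℕ,
      (∀ i j, i ≠ j → Disjoint (I i) (I j)) ∧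
      Finset.univ.biUnion I = S'.biUnion id ∧
      (∀ i, ∑ x ∈ I i, x = a i) := by
  classical
  obtain ⟨k', rfl⟩ : ∃ k', k = k'+1 := ⟨k-1, by omega⟩
  set T : Finset ℕ := (Finset.Icc 1 (m/2)).filter (fun x => ({x, m+1-x} : Finset ℕ) ∈ S)
    with hTdef
  have hTsub : T ⊆ Finset.Icc 1 (m/2) := Finset.filter_subset _ _
  have himg : T.image (fun x => ({x, m+1-x} : Finset ℕ)) = S := by
    apply Finset.Subset.antisymm
    · intro s hs
      rw [Finset.mem_image] at hs
      obtain ⟨x, hx, rfl⟩ := hs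
      exact (Finset.mem_filter.mp hx).2
    · intro s hs
      obtain ⟨x, hx, rfl⟩ := Finset.mem_image.mp (hS hs)
      exact Finset.mem_image.mpr ⟨x, Finset.mem_filter.mpr ⟨hx, hs⟩, rfl⟩
  have hinj : Set.InjOn (fun x => ({x, m+1-x} : Finset ℕ))
      ((Finset.Icc 1 (m/2) : Finset ℕ) : Set ℕ) := by
    intro x hx y hy h
    obtain ⟨h1, h2, h3, h4, h5⟩ := pair_mem_bounds hmeven hx
    obtain ⟨h1', h2', h3', h4', h5'⟩ := pair_mem_bounds hmeven hy
    have h' : ({x, m+1-x} : Finset ℕ) = {y, m+1-y} := h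
    have hx2 : x ∈ ({y, m+1-y} : Finset ℕ) := by
      rw [← h']; simp
    simp only [Finset.mem_insert, Finset.mem_singleton] at hx2
    omega
  have hTcard : T.card = S.card := by
    rw [← himg]
    exact (Finset.card_image_of_injOn (hinj.mono (Finset.coe_subset.mpr hTsub))).symm
  have h4 : m + 8*(k'+1) ≤ 4 * T.card := by
    rw [hTcard]
    have hq : (m : ℚ) + 8*((k' : ℚ)+1) ≤ 4 * S.card := by push_cast at hcard₂ ⊢; linarith
    exact_mod_cast hq
  have hdvd0 : ((∑ i, a i : ℕ) : ZMod (m+1)) = (((∅ : Finset ℕ).sum id : ℕ) : ZMod (m+1)) := by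
    rw [hsum]
    push_cast
    simp
  obtain ⟨used, J, husedT, husedcard, hJdisj, hJunion, hJsum⟩ :=
    phase1 hmeven k' T ∅ a hTsub (by simp) (by simp) (by simp) ha (by simp) hdvd0 (by omega)
  rw [Finset.empty_union] at hJunion
  have hd : ∀ i, (m+1) ∣ (a i - (J i).sum id) := by
    intro i
    obtain ⟨h1, h2⟩ := hJsum i
    rw [← ZMod.natCast_eq_zero_iff]
    rw [Nat.cast_sub h1, h2, sub_self]
  set d : Fin (k'+1) → ℕ := fun i => (a i - (J i).sum id) / (m+1) with hddef
  have hdi : ∀ i, (J i).sum id + d i * (m+1) = a i := by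
    intro i
    have hh := Nat.div_mul_cancel (hd i)
    have h1 := (hJsum i).1
    show (J i).sum id + (a i - (J i).sum id) / (m+1) * (m+1) = a i
    omega
  have hsumJ : (∑ i, (J i).sum id) = used.card * (m+1) := by
    rw [← Finset.sum_biUnion (fun i _ j _ hij => hJdisj i j hij), hJunion,
      Finset.sum_biUnion (fun z hz w hw hzw =>
        pair_disjoint hmeven (hTsub (husedT hz)) (hTsub (husedT hw)) hzw)]
    rw [Finset.sum_congr rfl (fun z hz => pair_sum hmeven (hTsub (husedT hz)))]
    rw [Finset.sum_const, smul_eq_mul]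
  have hsumd : (∑ i, d i) ≤ (T \ used).card := by
    have h1 : (∑ i, ((J i).sum id + d i * (m+1))) = ∑ i, a i :=
      Finset.sum_congr rfl (fun i _ => hdi i)
    rw [Finset.sum_add_distrib, hsumJ, hsum, ← Finset.sum_mul] at h1
    have h2' : (used.card + (∑ i, d i)) * (m+1) = ℓ * (m+1) := by
      rw [add_mul]; exact h1
    have h2 : used.card + (∑ i, d i) = ℓ :=
      Nat.eq_of_mul_eq_mul_right (by omega) h2'
    rw [Finset.card_sdiff_of_subset husedT]
    have h3 : used.card ≤ T.card := Finset.card_le_card husedT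
    omega
  obtain ⟨F, hFsub, hFdisj, hFcard⟩ := distribute (k'+1) d (T \ used) hsumd
  have hFT : ∀ i, F i ⊆ T := fun i => (hFsub i).trans (Finset.sdiff_subset)
  have hpairsdisj : ∀ (U V : Finset ℕ), U ⊆ T → V ⊆ T → Disjoint U V →
      Disjoint (U.biUnion (fun x => ({x, m+1-x} : Finset ℕ)))
        (V.biUnion (fun x => ({x, m+1-x} : Finset ℕ))) := by
    intro U V hU hV hUV
    rw [Finset.disjoint_left]
    intro b hb hb'
    rw [Finset.mem_biUnion] at hb hb'
    obtain ⟨z, hz, hbz⟩ := hb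
    obtain ⟨w, hw, hbw⟩ := hb'
    have hzw : z ≠ w := fun h => (Finset.disjoint_left.mp hUV) hz (h ▸ hw)
    exact (Finset.disjoint_left.mp
      (pair_disjoint hmeven (hTsub (hU hz)) (hTsub (hV hw)) hzw)) hbz hbw
  have hJsubPairs : ∀ i, J i ⊆ used.biUnion (fun x => ({x, m+1-x} : Finset ℕ)) := by
    intro i
    have h1 : J i ⊆ Finset.univ.biUnion J :=
      Finset.subset_biUnion_of_mem J (Finset.mem_univ i)
    rwa [hJunion] at h1
  have hIdisj : ∀ i j, i ≠ j → Disjoint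
      (J i ∪ (F i).biUnion (fun x => ({x, m+1-x} : Finset ℕ)))
      (J j ∪ (F j).biUnion (fun x => ({x, m+1-x} : Finset ℕ))) := by
    intro i j hij
    have hused_disj_F : ∀ j', Disjoint used (F j') := fun j' =>
      Finset.disjoint_of_subset_right (hFsub j') Finset.disjoint_sdiff
    rw [Finset.disjoint_union_left, Finset.disjoint_union_right, Finset.disjoint_union_right]
    refine ⟨⟨hJdisj i j hij, ?_⟩, ?_, ?_⟩
    · exact Finset.disjoint_of_subset_left (hJsubPairs i)
        (hpairsdisj used (F j) husedT (hFT j) (hused_disj_F j))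
    · exact (Finset.disjoint_of_subset_left (hJsubPairs j)
        (hpairsdisj used (F i) husedT (hFT i) (hused_disj_F i))).symm
    · exact hpairsdisj (F i) (F j) (hFT i) (hFT j) (hFdisj i j hij)
  refine ⟨(used ∪ Finset.univ.biUnion F).image (fun x => ({x, m+1-x} : Finset ℕ)), ?_,
    fun i => J i ∪ (F i).biUnion (fun x => ({x, m+1-x} : Finset ℕ)), hIdisj, ?_, ?_⟩
  · -- S' ⊆ S
    rw [← himg]
    apply Finset.image_subset_image
    intro z hz
    rw [Finset.mem_union] at hz
    rcases hz with hz | hz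
    · exact husedT hz
    · rw [Finset.mem_biUnion] at hz
      obtain ⟨i, _, hz⟩ := hz
      exact hFT i hz
  · -- union
    ext b
    constructor
    · intro hb
      rw [Finset.mem_biUnion] at hb
      obtain ⟨i, _, hb⟩ := hb
      rw [Finset.mem_union] at hb
      have hW : ∃ z ∈ used ∪ Finset.univ.biUnion F, b ∈ ({z, m+1-z} : Finset ℕ) := by
        rcases hb with hb | hb
        · obtain ⟨z, hz, hbz⟩ := Finset.mem_biUnion.mp (hJsubPairs i hb)
          exact ⟨z, Finset.mem_union_left _ hz, hbz⟩
        · obtain ⟨z, hz, hbz⟩ := Finset.mem_biUnion.mp hb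
          exact ⟨z, Finset.mem_union_right _
            (Finset.mem_biUnion.mpr ⟨i, Finset.mem_univ i, hz⟩), hbz⟩
      obtain ⟨z, hzW, hbz⟩ := hW
      rw [Finset.mem_biUnion]
      exact ⟨{z, m+1-z}, Finset.mem_image_of_mem _ hzW, hbz⟩
    · intro hb
      rw [Finset.mem_biUnion] at hb
      obtain ⟨s, hs, hbs⟩ := hb
      obtain ⟨z, hzW, rfl⟩ := Finset.mem_image.mp hs
      rw [Finset.mem_union] at hzW
      rw [Finset.mem_biUnion]
      rcases hzW with hz | hz
      · have hbU : b ∈ used.biUnion (fun x => ({x, m+1-x} : Finset ℕ)) :=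
          Finset.mem_biUnion.mpr ⟨z, hz, hbs⟩
        rw [← hJunion] at hbU
        obtain ⟨i, _, hbJ⟩ := Finset.mem_biUnion.mp hbU
        exact ⟨i, Finset.mem_univ i, Finset.mem_union_left _ hbJ⟩
      · obtain ⟨i, _, hzF⟩ := Finset.mem_biUnion.mp hz
        exact ⟨i, Finset.mem_univ i, Finset.mem_union_right _
          (Finset.mem_biUnion.mpr ⟨z, hzF, hbs⟩)⟩
  · -- sums
    intro i
    have hused_disj_F : Disjoint used (F i) :=
      Finset.disjoint_of_subset_right (hFsub i) Finset.disjoint_sdiff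
    have hdisjJF : Disjoint (J i) ((F i).biUnion (fun x => ({x, m+1-x} : Finset ℕ))) :=
      Finset.disjoint_of_subset_left (hJsubPairs i)
        (hpairsdisj used (F i) husedT (hFT i) hused_disj_F)
    have h1 : (J i ∪ (F i).biUnion (fun x => ({x, m+1-x} : Finset ℕ))).sum id =
        (J i).sum id + ((F i).biUnion (fun x => ({x, m+1-x} : Finset ℕ))).sum id :=
      Finset.sum_union hdisjJF
    have h2 : ((F i).biUnion (fun x => ({x, m+1-x} : Finset ℕ))).sum id = d i * (m+1) := by
      rw [Finset.sum_biUnion (fun z hz w hw hzw =>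
        pair_disjoint hmeven (hTsub (hFT i hz)) (hTsub (hFT i hw)) hzw)]
      rw [Finset.sum_congr rfl (fun z hz => pair_sum hmeven (hTsub (hFT i hz)))]
      rw [Finset.sum_const, smul_eq_mul, hFcard i]
    show (J i ∪ (F i).biUnion (fun x => ({x, m+1-x} : Finset ℕ))).sum id = a i
    rw [h1, h2, hdi i]
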